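/- Under the same hypotheses ((F, τ₀) a difference field with F/K an algebraic function field of one variable, r ∈ F^× with v_P(τ₀ⁱr) > 0 for all i ≥ 0 at a place P, no algebraic solutions of Eq(A, i) for i ≥ 1, Y transcendental over F, τ(Y) = 1 + r/Y), there is no S ∈ F(Y) such that S + (r/Y²)·τ(S) + α/Y = 0 for any α ∈ F^×. -/

import Mathlib

universe u

/-- `MoebiusEq f M g` means `f * (M₂₁ g + M₂₂) = M₁₁ g + M₁₂`, i.e. `Eq(f; M; g)`. -/
def MoebiusEq {U : Type*} [Field U] (f : U) (M : Matrix (Fin 2) (Fin 2) U) (g : U) : Prop :=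
  f * (M 1 0 * g + M 1 1) = M 0 0 * g + M 0 1

/-- The τ-twisted cocycle `A_i = (τ^{i-1}A)⋯(τA)A`. -/
def cocycle {L : Type*} [Field L] (τ : L →+* L) (A : Matrix (Fin 2) (Fin 2) L) :
    ℕ → Matrix (Fin 2) (Fin 2) L
  | 0 => 1
  | n + 1 => A.map ((⇑τ)^[n]) * cocycle τ A n

open Polynomial

lemma map_one_mat {L : Type*} [Field L] (τ : L →+* L) :
    (1 : Matrix (Fin 2) (Fin 2) L).map τ = 1 := by
  ext i j
  simp [Matrix.map_apply, Matrix.one_apply, apply_ite τ]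

lemma cocycle_succ' {L : Type*} [Field L] (τ : L →+* L) (A : Matrix (Fin 2) (Fin 2) L) (n : ℕ) :
    cocycle τ A (n+1) = (cocycle τ A n).map τ * A := by
  induction n with
  | zero =>
      show A.map ((⇑τ)^[0]) * 1 = (1 : Matrix (Fin 2) (Fin 2) L).map τ * A
      simp [map_one_mat]
  | succ n ih =>
      show A.map ((⇑τ)^[n+1]) * cocycle τ A (n+1) = (cocycle τ A (n+1)).map τ * A
      conv_rhs => rw [show cocycle τ A (n+1) = A.map ((⇑τ)^[n]) * cocycle τ A n from rfl]
      rw [ih]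
      have hmap : ∀ (M N : Matrix (Fin 2) (Fin 2) L), (M * N).map τ = M.map τ * N.map τ := by
        intro M N; exact Matrix.map_mul (f := τ)
      rw [hmap]
      have : A.map ((⇑τ)^[n+1]) = (A.map ((⇑τ)^[n])).map τ := by
        ext i j
        show (⇑τ)^[n+1] (A i j) = τ ((⇑τ)^[n] (A i j))
        rw [Function.iterate_succ_apply' τ n (A i j)]
      rw [this, Matrix.mul_assoc]

lemma cocycle_zero {L : Type*} [Field L] (τ : L →+* L) (A : Matrix (Fin 2) (Fin 2) L) :
    cocycle τ A 0 = 1 := rfl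

lemma cocycle_succ {L : Type*} [Field L] (τ : L →+* L) (A : Matrix (Fin 2) (Fin 2) L) (n : ℕ) :
    cocycle τ A (n+1) = A.map ((⇑τ)^[n]) * cocycle τ A n := rfl

lemma val_s {F : Type u} [Field F] (τ₀ : F →+* F) (r : F)
    (v : AddValuation F (WithTop ℤ)) (hvr : ∀ i : ℕ, 0 < v ((⇑τ₀)^[i] r)) (n : ℕ) :
    v ((cocycle τ₀ !![1,r;1,0] n) 0 0 + (cocycle τ₀ !![1,r;1,0] n) 0 1) = 0 ∧
    v ((cocycle τ₀ !![1,r;1,0] n) 1 0 + (cocycle τ₀ !![1,r;1,0] n) 1 1) = 0 := by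
  induction n with
  | zero =>
      rw [cocycle_zero]
      constructor <;> · simp [Matrix.one_apply]
  | succ n ih =>
      have hs : v _ = 0 := ih.1
      have ht : v _ = 0 := ih.2
      set M := cocycle τ₀ !![1,r;1,0] n with hM
      rw [cocycle_succ, ← hM]
      have e00 : (Matrix.map !![1,r;1,0] ((⇑τ₀)^[n]) * M) 0 0
          = M 0 0 + (⇑τ₀)^[n] r * M 1 0 := by
        simp [Matrix.mul_apply, Fin.sum_univ_two, Matrix.map_apply]
      have e01 : (Matrix.map !![1,r;1,0] ((⇑τ₀)^[n]) * M) 0 1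
          = M 0 1 + (⇑τ₀)^[n] r * M 1 1 := by
        simp [Matrix.mul_apply, Fin.sum_univ_two, Matrix.map_apply]
      have e10 : (Matrix.map !![1,r;1,0] ((⇑τ₀)^[n]) * M) 1 0 = M 0 0 := by
        simp [Matrix.mul_apply, Fin.sum_univ_two, Matrix.map_apply]
      have e11 : (Matrix.map !![1,r;1,0] ((⇑τ₀)^[n]) * M) 1 1 = M 0 1 := by
        simp [Matrix.mul_apply, Fin.sum_univ_two, Matrix.map_apply]
      rw [e00, e01, e10, e11]
      refine ⟨?_, hs⟩
      have hre : M 0 0 + (⇑τ₀)^[n] r * M 1 0 + (M 0 1 + (⇑τ₀)^[n] r * M 1 1)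
          = (M 0 0 + M 0 1) + (⇑τ₀)^[n] r * (M 1 0 + M 1 1) := by ring
      rw [hre]
      have hv2 : v ((⇑τ₀)^[n] r * (M 1 0 + M 1 1)) = v ((⇑τ₀)^[n] r) := by
        rw [v.map_mul, ht, add_zero]
      have hlt : v (M 0 0 + M 0 1) < v ((⇑τ₀)^[n] r * (M 1 0 + M 1 1)) := by
        rw [hv2, hs]; exact hvr n
      rw [AddValuation.map_add_eq_of_lt_left v hlt, hs]

noncomputable def TT {L : Type*} [Field L] (s : L →+* L) (ρ : L) (m : ℕ) (P : L[X]) : L[X] :=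
  ∑ i ∈ Finset.range (m+1), C (s (P.coeff i)) * (X + C ρ)^i * X^(m-i)

lemma TT_eval_zero {L : Type*} [Field L] (s : L →+* L) (ρ : L) (m : ℕ) (P : L[X]) :
    (TT s ρ m P).eval 0 = s (P.coeff m) * ρ^m := by
  rw [TT, eval_finset_sum]
  rw [Finset.sum_eq_single m]
  · simp
  · intro i hi hne
    have : m - i ≠ 0 := by
      simp only [Finset.mem_range] at hi; omega
    simp [zero_pow this]
  · intro h
    exact absurd (Finset.self_mem_range_succ m) h

lemma TT_eval {L : Type*} [Field L] (s : L →+* L) (ρ : L) (m : ℕ) (P : L[X])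
    {c : L} (hc : c ≠ 0) (hm : P.natDegree ≤ m) :
    (TT s ρ m P).eval c = (P.map s).eval ((c + ρ)/c) * c^m := by
  have hdeg : (P.map s).natDegree < m + 1 :=
    lt_of_le_of_lt (le_trans (natDegree_map_le) hm) (Nat.lt_succ_self m)
  rw [TT, eval_finset_sum, Polynomial.eval_eq_sum_range' hdeg, Finset.sum_mul]
  refine Finset.sum_congr rfl (fun i hi => ?_)
  have him : i ≤ m := by simp only [Finset.mem_range] at hi; omega
  rw [coeff_map]
  have hcm : c ^ m = c ^ i * c ^ (m - i) := by
    rw [← pow_add]; congr 1; omega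
  simp only [eval_mul, eval_pow, eval_C, eval_add, eval_X]
  rw [hcm, div_pow]
  field_simp
lemma TT_map {F L : Type*} [Field F] [Field L] (τ₀ : F →+* F) (sL : L →+* L)
    (ι : F →+* L) (hcomm : ∀ x, ι (τ₀ x) = sL (ι x)) (r : F) (m : ℕ) (P : F[X]) :
    (TT τ₀ r m P).map ι = TT sL (ι r) m (P.map ι) := by
  rw [TT, TT, Polynomial.map_sum]
  refine Finset.sum_congr rfl (fun i _ => ?_)
  rw [Polynomial.map_mul, Polynomial.map_mul, Polynomial.map_pow, Polynomial.map_pow,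
    Polynomial.map_add, map_C, map_X, map_C, hcomm, coeff_map]

lemma pow_aux {L : Type*} [Field L] (x c : L) (hx : x ≠ 0) {i m : ℕ} (him : i ≤ m) :
    (1 + c/x)^i * x^m = (x + c)^i * x^(m-i) := by
  have h1 : (1 + c/x) * x = x + c := by field_simp
  have hxm : x^m = x^i * x^(m-i) := by rw [← pow_add]; congr 1; omega
  calc (1+c/x)^i * x^m = ((1+c/x)*x)^i * x^(m-i) := by rw [mul_pow, hxm]; ring
  _ = (x+c)^i * x^(m-i) := by rw [h1]

lemma tau_bridge {F : Type u} [Field F] (τ₀ : F →+* F) (r : F)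
    (τ : RatFunc F →+* RatFunc F)
    (hτF : ∀ x : F, τ (algebraMap F (RatFunc F) x) = algebraMap F (RatFunc F) (τ₀ x))
    (hτY : τ RatFunc.X = 1 + algebraMap F (RatFunc F) r / RatFunc.X)
    (p : F[X]) (m : ℕ) (hm : p.natDegree ≤ m) :
    τ (algebraMap F[X] (RatFunc F) p) * RatFunc.X ^ m
      = algebraMap F[X] (RatFunc F) (TT τ₀ r m p) := by
  have hcomp : τ.comp (algebraMap F[X] (RatFunc F))
      = Polynomial.eval₂RingHom ((algebraMap F (RatFunc F)).comp τ₀) (τ RatFunc.X) := by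
    apply Polynomial.ringHom_ext
    · intro a
      simp only [RingHom.comp_apply, RatFunc.algebraMap_C, coe_eval₂RingHom, eval₂_C]
      rw [← RatFunc.algebraMap_eq_C, hτF]
    · simp only [RingHom.comp_apply, RatFunc.algebraMap_X, coe_eval₂RingHom, eval₂_X]
  have hτp : τ (algebraMap F[X] (RatFunc F) p)
      = Polynomial.eval₂ ((algebraMap F (RatFunc F)).comp τ₀) (τ RatFunc.X) p := by
    have := congrArg (fun (g : F[X] →+* RatFunc F) => g p) hcomp
    simpa using this
  rw [hτp, Polynomial.eval₂_eq_sum_range' _ (lt_of_le_of_lt hm (Nat.lt_succ_self m)) _]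
  rw [Finset.sum_mul]
  rw [TT, map_sum]
  refine Finset.sum_congr rfl (fun i hi => ?_)
  have him : i ≤ m := by simp only [Finset.mem_range] at hi; omega
  rw [hτY]
  simp only [map_mul, map_pow, map_add, RatFunc.algebraMap_X, RatFunc.algebraMap_C,
    RingHom.comp_apply]
  rw [← RatFunc.algebraMap_eq_C]
  rw [mul_assoc, pow_aux RatFunc.X (algebraMap F (RatFunc F) r) RatFunc.X_ne_zero him]
  ring

-- evaluation of star identity facts
section Dich
variable {U : Type*} [Field U] [IsAlgClosed U] (σ : U →+* U) (ρ β : U)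

/-- the step lemmas and the dichotomy -/
lemma dichotomy (hρ : ρ ≠ 0)
    (NN DD : U[X]) (hN : NN ≠ 0) (hDm : DD.Monic) (hcop : IsCoprime NN DD)
    (star : X^(NN.natDegree+2) * NN * TT σ ρ DD.natDegree DD
      + C ρ * X^(DD.natDegree) * TT σ ρ NN.natDegree NN * DD
      + C β * X^(NN.natDegree+1) * DD * TT σ ρ DD.natDegree DD = 0) :
    (∃ (n : ℕ) (c : ℕ → U), 1 ≤ n ∧ DD.eval (c 0) = 0 ∧ c n = c 0 ∧
      ∀ j < n, σ (c j) * c (j+1) = c (j+1) + ρ)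
    ∨ (∃ (n : ℕ) (c : ℕ → U), 1 ≤ n ∧ c 0 = 0 ∧ c n = 1 ∧
      ∀ j < n, σ (c j) * c (j+1) = c (j+1) + ρ) := by
  have hD : DD ≠ 0 := hDm.ne_zero
  set mN := NN.natDegree with hmN
  set mD := DD.natDegree with hmD
  -- coprime eval fact
  have hcop_eval : ∀ z : U, DD.eval z = 0 → NN.eval z ≠ 0 := by
    intro z hz
    obtain ⟨a, b, hab⟩ := hcop
    intro hN0
    have := congrArg (Polynomial.eval z) hab
    simp [hz, hN0] at this
  -- evaluation of star
  have star_eval : ∀ z : U,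
      z^(mN+2) * NN.eval z * (TT σ ρ mD DD).eval z
      + ρ * z^mD * (TT σ ρ mN NN).eval z * DD.eval z
      + β * z^(mN+1) * DD.eval z * (TT σ ρ mD DD).eval z = 0 := by
    intro z
    have := congrArg (Polynomial.eval z) star
    simpa using this
  -- step lemmas
  have step_fwd : ∀ c : U, DD.eval c = 0 → σ c ≠ 1 →
      DD.eval (ρ/(σ c - 1)) = 0 := by
    intro c hc hσc
    set w := ρ/(σ c - 1) with hw
    have hden : σ c - 1 ≠ 0 := sub_ne_zero.mpr hσc
    have hwne : w ≠ 0 := div_ne_zero hρ hden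
    have hwρ : (w + ρ)/w = σ c := by
      rw [hw]; field_simp; ring
    have hTDw : (TT σ ρ mD DD).eval w = 0 := by
      rw [TT_eval σ ρ mD DD hwne le_rfl, hwρ]
      have : (DD.map σ).eval (σ c) = σ (DD.eval c) := by
        rw [eval_map, Polynomial.eval₂_at_apply]
      rw [this, hc, map_zero, zero_mul]
    have h := star_eval w
    rw [hTDw] at h
    simp only [mul_zero, zero_add, add_zero] at h
    have hTNw : (TT σ ρ mN NN).eval w ≠ 0 := by
      rw [TT_eval σ ρ mN NN hwne le_rfl, hwρ]
      have : (NN.map σ).eval (σ c) = σ (NN.eval c) := by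
        rw [eval_map, Polynomial.eval₂_at_apply]
      rw [this]
      exact mul_ne_zero (fun h0 => hcop_eval c hc (by
        have := σ.injective (h0.trans (map_zero σ).symm); exact this)) (pow_ne_zero _ hwne)
    have hfac : ρ * w^mD * (TT σ ρ mN NN).eval w ≠ 0 :=
      mul_ne_zero (mul_ne_zero hρ (pow_ne_zero _ hwne)) hTNw
    exact (mul_eq_zero.mp h).resolve_left hfac
  have step_bwd : ∀ z : U, ∃ z' : U, (DD.eval z = 0 ∧ z ≠ 0) →
      (DD.eval z' = 0 ∧ σ z' * z = z + ρ) := by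
    intro z
    by_cases hz : DD.eval z = 0 ∧ z ≠ 0
    · obtain ⟨hz0, hzne⟩ := hz
      have hTD : (TT σ ρ mD DD).eval z = 0 := by
        have h := star_eval z
        rw [hz0] at h
        simp only [mul_zero, zero_mul, add_zero, zero_add] at h
        rcases mul_eq_zero.mp h with h' | h'
        · rcases mul_eq_zero.mp h' with h'' | h''
          · exact absurd h'' (pow_ne_zero _ hzne)
          · exact absurd h'' (hcop_eval z hz0)
        · exact h'
      rw [TT_eval σ ρ mD DD hzne le_rfl] at hTD
      have hroot : (DD.map σ).eval ((z + ρ)/z) = 0 :=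
        (mul_eq_zero.mp hTD).resolve_right (pow_ne_zero _ hzne)
      -- (z+ρ)/z is a root of DD.map σ, so it is σ of a root of DD
      have hsplits : DD.Splits := IsAlgClosed.splits DD
      have hmem : (z + ρ)/z ∈ (DD.map σ).roots := by
        rw [Polynomial.mem_roots']
        exact ⟨(Polynomial.map_ne_zero_iff σ.injective).mpr hD, hroot⟩
      rw [hsplits.roots_map σ, Multiset.mem_map] at hmem
      obtain ⟨z', hz'mem, hz'⟩ := hmem
      refine ⟨z', fun _ => ⟨(Polynomial.mem_roots'.mp hz'mem).2, ?_⟩⟩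
      rw [hz']
      field_simp
    · exact ⟨0, fun h => absurd h hz⟩
  -- case: no nonzero root of DD
  by_cases hex : ∃ z : U, DD.eval z = 0 ∧ z ≠ 0
  swap
  · exfalso
    push_neg at hex
    by_cases hd0 : mD = 0
    · -- DD = 1
      have hD1 : DD = 1 := by
        have := hDm.natDegree_eq_zero.mp hd0
        exact this
      have h := star_eval 0
      rw [hd0] at h
      have hTN0 : (TT σ ρ mN NN).eval 0 = σ (NN.coeff mN) * ρ^mN := TT_eval_zero σ ρ mN NN
      have hTNne : (TT σ ρ mN NN).eval 0 ≠ 0 := by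
        rw [hTN0]
        refine mul_ne_zero (fun h0 => ?_) (pow_ne_zero _ hρ)
        have : NN.coeff mN = 0 := σ.injective (h0.trans (map_zero σ).symm)
        exact hN (Polynomial.leadingCoeff_eq_zero.mp this)
      rw [hD1] at h
      simp only [eval_one, mul_one, pow_zero, one_mul] at h
      rw [zero_pow (by omega : mN + 2 ≠ 0), zero_pow (by omega : mN + 1 ≠ 0)] at h
      simp only [zero_mul, mul_zero, zero_add, add_zero, mul_one] at h
      rcases mul_eq_zero.mp h with h' | h'
      · exact hρ h'
      · exact hTNne h'
    · -- DD = X^mD with mD ≥ 1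
      have hallz : ∀ z, DD.eval z = 0 → z = 0 := fun z hz => hex z hz
      have hsplits : DD.Splits := IsAlgClosed.splits DD
      have hcard : DD.roots.card = mD := (Polynomial.splits_iff_card_roots.mp hsplits)
      have hrepl : DD.roots = Multiset.replicate mD 0 :=
        Multiset.eq_replicate.mpr ⟨hcard,
          fun b hb => hallz b (Polynomial.mem_roots'.mp hb).2⟩
      have hDX : DD = X^mD := by
        conv_lhs => rw [hsplits.eq_prod_roots_of_monic hDm]
        rw [hrepl, Multiset.map_replicate, Multiset.prod_replicate]
        simp
      have hD0root : DD.eval 0 = 0 := by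
        rw [hDX]; simp [zero_pow hd0]
      have hNN0 : NN.eval 0 ≠ 0 := hcop_eval 0 hD0root
      have hρn : (-ρ) ≠ 0 := neg_ne_zero.mpr hρ
      have hfrac : (-ρ + ρ)/(-ρ) = 0 := by simp
      have hTDneg : (TT σ ρ mD DD).eval (-ρ) = 0 := by
        rw [TT_eval σ ρ mD DD hρn le_rfl, hfrac, hDX]
        rw [Polynomial.map_pow, map_X]
        simp [zero_pow hd0]
      have hDneg : DD.eval (-ρ) ≠ 0 := by
        rw [hDX]; simpa using pow_ne_zero mD hρn
      have hTNneg : (TT σ ρ mN NN).eval (-ρ) ≠ 0 := by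
        rw [TT_eval σ ρ mN NN hρn le_rfl, hfrac]
        refine mul_ne_zero (fun h0 => ?_) (pow_ne_zero _ hρn)
        rw [show (0 : U) = σ 0 from (map_zero σ).symm, eval_map,
          Polynomial.eval₂_at_apply] at h0
        exact hNN0 (σ.injective h0)
      have h := star_eval (-ρ)
      rw [hTDneg] at h
      simp only [mul_zero, zero_add, add_zero] at h
      rcases mul_eq_zero.mp h with h' | h'
      · rcases mul_eq_zero.mp h' with h'' | h''
        · rcases mul_eq_zero.mp h'' with h3 | h3
          · exact hρ h3
          · exact pow_ne_zero mD hρn h3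
        · exact hTNneg h''
      · exact hDneg h'
  -- main case: there is a nonzero root z₀
  obtain ⟨z₀, hz₀root, hz₀ne⟩ := hex
  classical
  -- the forward orbit
  set θ : U → U := fun c => ρ/(σ c - 1) with hθ
  have θ_rel : ∀ x : U, σ x ≠ 1 → σ x * θ x = θ x + ρ := by
    intro x hx
    have hden : σ x - 1 ≠ 0 := sub_ne_zero.mpr hx
    have : θ x * (σ x - 1) = ρ := div_mul_cancel₀ ρ hden
    linear_combination this
  set f : ℕ → U := fun k => θ^[k] z₀ with hf
  have hf0 : f 0 = z₀ := rfl
  have hfsucc : ∀ k, f (k+1) = θ (f k) := fun k => Function.iterate_succ_apply' θ k z₀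
  -- generic cycle extractors
  have cycle_fwd : ∀ (w : ℕ → U), (∀ k, DD.eval (w k) = 0) →
      (∀ k, σ (w k) * w (k+1) = w (k+1) + ρ) →
      (∃ (n : ℕ) (c : ℕ → U), 1 ≤ n ∧ DD.eval (c 0) = 0 ∧ c n = c 0 ∧
        ∀ j < n, σ (c j) * c (j+1) = c (j+1) + ρ) := by
    intro w hroot hrel
    set Z : Finset U := DD.roots.toFinset with hZ
    have hmem : ∀ k : ℕ, w k ∈ Z := by
      intro k
      rw [hZ, Multiset.mem_toFinset, Polynomial.mem_roots']
      exact ⟨hD, hroot k⟩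
    have hcard : Fintype.card (↥Z) < Fintype.card (Fin (Z.card + 1)) := by
      simp [Fintype.card_coe]
    obtain ⟨i, j, hij, hfeq⟩ := Fintype.exists_ne_map_eq_of_card_lt
      (fun k : Fin (Z.card + 1) => (⟨w k, hmem k⟩ : ↥Z)) hcard
    have hfeq' : w i = w j := by
      simpa using congrArg Subtype.val hfeq
    have hij' : (i : ℕ) ≠ (j : ℕ) := fun h => hij (Fin.val_injective h)
    rcases lt_or_gt_of_ne hij' with h | h
    · refine ⟨j - i, fun t => w (i + t), by omega, by simpa using hroot i, ?_, ?_⟩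
      · simp only
        rw [show (i : ℕ) + ((j : ℕ) - (i : ℕ)) = j by omega, add_zero]
        exact hfeq'.symm
      · intro t _
        have := hrel ((i : ℕ) + t)
        simpa [add_assoc] using this
    · refine ⟨i - j, fun t => w (j + t), by omega, by simpa using hroot j, ?_, ?_⟩
      · simp only
        rw [show (j : ℕ) + ((i : ℕ) - (j : ℕ)) = i by omega, add_zero]
        exact hfeq'
      · intro t _
        have := hrel ((j : ℕ) + t)
        simpa [add_assoc] using this
  -- forward orbit analysis : produces either a cycle or a chain from z₀ to 1
  have forward : (∃ (n : ℕ) (c : ℕ → U), 1 ≤ n ∧ DD.eval (c 0) = 0 ∧ c n = c 0 ∧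
        ∀ j < n, σ (c j) * c (j+1) = c (j+1) + ρ)
      ∨ (∃ (n : ℕ) (c : ℕ → U), c 0 = z₀ ∧ c n = 1 ∧
        ∀ j < n, σ (c j) * c (j+1) = c (j+1) + ρ) := by
    by_cases hfwd : ∀ k, DD.eval (f k) = 0 ∧ σ (f k) ≠ 1
    · left
      refine cycle_fwd f (fun k => (hfwd k).1) (fun k => ?_)
      rw [hfsucc k]
      exact θ_rel (f k) (hfwd k).2
    · right
      push_neg at hfwd
      have hex2 : ∃ k, ¬ (DD.eval (f k) = 0 ∧ σ (f k) ≠ 1) := by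
        obtain ⟨k, hk⟩ := hfwd
        exact ⟨k, fun hcon => hcon.2 (hk hcon.1)⟩
      set k := Nat.find hex2 with hkdef
      have hkspec := Nat.find_spec hex2
      have hmin : ∀ j, j < k → DD.eval (f j) = 0 ∧ σ (f j) ≠ 1 := by
        intro j hj
        have := Nat.find_min hex2 hj
        tauto
      have hroots : ∀ j, j ≤ k → DD.eval (f j) = 0 := by
        intro j
        induction j with
        | zero => intro _; simpa [hf0] using hz₀root
        | succ j ih =>
            intro hjk
            have hj : j < k := by omega
            obtain ⟨h1, h2⟩ := hmin j hj
            rw [hfsucc j]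
            exact step_fwd (f j) h1 h2
      have hfk1 : f k = 1 := by
        have h1 : σ (f k) = 1 := by
          by_contra hcon
          exact hkspec ⟨hroots k le_rfl, hcon⟩
        exact σ.injective (by rw [h1, map_one])
      exact ⟨k, f, hf0, hfk1, fun j hj => by
        rw [hfsucc j]; exact θ_rel (f j) (hmin j hj).2⟩
  rcases forward with hcyc | ⟨kf, cf, hcf0, hcf1, hcfrel⟩
  · exact Or.inl hcyc
  -- backward orbit
  obtain ⟨bwd, hbwd⟩ := Classical.axiomOfChoice step_bwd
  set g : ℕ → U := fun k => bwd^[k] z₀ with hg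
  have hg0 : g 0 = z₀ := rfl
  have hgsucc : ∀ k, g (k+1) = bwd (g k) := fun k => Function.iterate_succ_apply' bwd k z₀
  by_cases hb : ∀ k, DD.eval (g k) = 0 ∧ g k ≠ 0
  · -- cycle (backward): use w t := g (N - t) for a big N?  instead direct pigeonhole
    left
    set Z : Finset U := DD.roots.toFinset with hZ
    have hmem : ∀ k : ℕ, g k ∈ Z := by
      intro k
      rw [hZ, Multiset.mem_toFinset, Polynomial.mem_roots']
      exact ⟨hD, (hb k).1⟩
    have hcard : Fintype.card (↥Z) < Fintype.card (Fin (Z.card + 1)) := by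
      simp [Fintype.card_coe]
    obtain ⟨i, j, hij, hfeq⟩ := Fintype.exists_ne_map_eq_of_card_lt
      (fun k : Fin (Z.card + 1) => (⟨g k, hmem k⟩ : ↥Z)) hcard
    have hfeq' : g i = g j := by
      simpa using congrArg Subtype.val hfeq
    have hij' : (i : ℕ) ≠ (j : ℕ) := fun h => hij (Fin.val_injective h)
    have hrelg : ∀ s : ℕ, σ (g (s+1)) * g s = g s + ρ := by
      intro s
      have := (hbwd (g s)) ⟨(hb s).1, (hb s).2⟩
      rw [← hgsucc s] at this
      exact this.2
    -- wlog i < j, cycle c t := g (j - t)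
    have main : ∀ (a b : ℕ), a < b → g a = g b →
        (∃ (n : ℕ) (c : ℕ → U), 1 ≤ n ∧ DD.eval (c 0) = 0 ∧ c n = c 0 ∧
          ∀ t < n, σ (c t) * c (t+1) = c (t+1) + ρ) := by
      intro a b hab heq
      refine ⟨b - a, fun t => g (b - t), by omega, (hb b).1, ?_, ?_⟩
      · show g (b - (b - a)) = g (b - 0)
        rw [show b - (b - a) = a by omega, Nat.sub_zero]
        exact heq
      · intro t ht
        show σ (g (b - t)) * g (b - (t+1)) = g (b - (t+1)) + ρ
        have hs : b - t = (b - t - 1) + 1 := by omega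
        have hs2 : b - (t+1) = b - t - 1 := by omega
        rw [hs2, hs]
        exact hrelg (b - t - 1)
    rcases lt_or_gt_of_ne hij' with h | h
    · exact main i j h hfeq'
    · exact main j i h hfeq'.symm
  · -- backward orbit reaches 0 : chain from 0 to z₀, then to 1
    right
    push_neg at hb
    have hex2 : ∃ k, ¬ (DD.eval (g k) = 0 ∧ g k ≠ 0) := by
      obtain ⟨k, hk⟩ := hb
      exact ⟨k, fun hcon => hcon.2 (hk hcon.1)⟩
    set kb := Nat.find hex2 with hkbdef
    have hkspec := Nat.find_spec hex2
    have hminb : ∀ j, j < kb → DD.eval (g j) = 0 ∧ g j ≠ 0 := by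
      intro j hj
      have := Nat.find_min hex2 hj
      tauto
    have hkb1 : 1 ≤ kb := by
      rcases Nat.eq_zero_or_pos kb with h0 | h1
      · exfalso
        apply hkspec
        rw [hkbdef] at h0
        rw [h0, hg0]
        exact ⟨hz₀root, hz₀ne⟩
      · exact h1
    have hrootkb : DD.eval (g kb) = 0 := by
      have hs : kb = (kb - 1) + 1 := by omega
      rw [hs, hgsucc]
      exact ((hbwd (g (kb - 1))) (hminb (kb - 1) (by omega))).1
    have hgkb0 : g kb = 0 := by
      by_contra hcon
      exact hkspec ⟨hrootkb, hcon⟩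
    -- backward chain : e t := g (kb - t), e 0 = 0, e kb = z₀
    -- concatenation with cf
    refine ⟨kb + kf, fun t => if t ≤ kb then g (kb - t) else cf (t - kb), by omega, ?_, ?_, ?_⟩
    · simp only [if_pos (Nat.zero_le kb)]
      rw [Nat.sub_zero]
      exact hgkb0
    · by_cases hkf : kf = 0
      · have : kb + kf ≤ kb := by omega
        simp only [if_pos this]
        rw [show kb - (kb + kf) = 0 by omega, hg0]
        rw [hkf] at hcf1
        rw [← hcf0, hcf1]
      · have : ¬ (kb + kf ≤ kb) := by omega
        simp only [if_neg this]
        rw [show kb + kf - kb = kf by omega]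
        exact hcf1
    · intro t ht
      by_cases h1 : t + 1 ≤ kb
      · have h2 : t ≤ kb := by omega
        simp only [if_pos h1, if_pos h2]
        have hs : kb - t = (kb - t - 1) + 1 := by omega
        have hs2 : kb - (t+1) = kb - t - 1 := by omega
        rw [hs2, hs, hgsucc]
        exact ((hbwd (g (kb - t - 1))) (hminb (kb - t - 1) (by omega))).2
      · -- t + 1 > kb
        have h2 : ¬ (t + 1 ≤ kb) := h1
        simp only [if_neg h2]
        by_cases h3 : t ≤ kb
        · -- t = kb
          have ht' : t = kb := by omega
          simp only [if_pos h3]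
          rw [show kb - t = 0 by omega, hg0, show t + 1 - kb = 1 by omega]
          have := hcfrel 0 (by omega)
          rw [hcf0] at this
          exact this
        · simp only [if_neg h3]
          rw [show t + 1 - kb = (t - kb) + 1 by omega]
          exact hcfrel (t - kb) (by omega)

end Dich

lemma exists_sigma {F : Type u} [Field F] [CharZero F] (τ₀ : F →+* F) :
    ∃ σ : (AlgebraicClosure F) →+* (AlgebraicClosure F),
      ∀ x : F, σ (algebraMap F (AlgebraicClosure F) x)
        = algebraMap F (AlgebraicClosure F) (τ₀ x) := by
  set U := AlgebraicClosure F
  haveI : CharZero U := charZero_of_injective_algebraMap (algebraMap F U).injective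
  have hsurj := IsAlgClosed.surjective_restrictDomain_of_isAlgebraic
    (K := ℚ) (L := F) (E := U) (M := U)
  obtain ⟨φ, hφ⟩ := hsurj (((algebraMap F U).comp τ₀).toRatAlgHom)
  refine ⟨φ.toRingHom, fun x => ?_⟩
  have := congrArg (fun ψ => ψ x) hφ
  simpa [AlgHom.domRestrict] using this

lemma chain_cocycle {F : Type u} {U : Type*} [Field F] [Field U] [Algebra F U]
    (τ₀ : F →+* F) (σ : U →+* U)
    (hσ : ∀ x : F, σ (algebraMap F U x) = algebraMap F U (τ₀ x))
    (r : F) (c : ℕ → U) (n : ℕ)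
    (hc : ∀ j < n, σ (c j) * c (j+1) = c (j+1) + algebraMap F U r) :
    (⇑σ)^[n] (c 0) * (algebraMap F U ((cocycle τ₀ !![1,r;1,0] n) 1 0) * c n
        + algebraMap F U ((cocycle τ₀ !![1,r;1,0] n) 1 1))
      = algebraMap F U ((cocycle τ₀ !![1,r;1,0] n) 0 0) * c n
        + algebraMap F U ((cocycle τ₀ !![1,r;1,0] n) 0 1) := by
  induction n with
  | zero =>
      show c 0 * _ = _
      simp [cocycle, Matrix.one_apply]
  | succ n ih =>
      have ih' := ih (fun j hj => hc j (Nat.lt_succ_of_lt hj))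
      have h2 := congrArg σ ih'
      simp only [map_mul, map_add, hσ] at h2
      set M := cocycle τ₀ !![1,r;1,0] n with hM
      have e00 : (cocycle τ₀ !![1,r;1,0] (n+1)) 0 0 = τ₀ (M 0 0) + τ₀ (M 0 1) := by
        rw [cocycle_succ']
        simp [Matrix.mul_apply, Fin.sum_univ_two, Matrix.map_apply]
        rfl
      have e01 : (cocycle τ₀ !![1,r;1,0] (n+1)) 0 1 = τ₀ (M 0 0) * r := by
        rw [cocycle_succ']
        simp [Matrix.mul_apply, Fin.sum_univ_two, Matrix.map_apply]
        exact Or.inl rfl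
      have e10 : (cocycle τ₀ !![1,r;1,0] (n+1)) 1 0 = τ₀ (M 1 0) + τ₀ (M 1 1) := by
        rw [cocycle_succ']
        simp [Matrix.mul_apply, Fin.sum_univ_two, Matrix.map_apply]
        rfl
      have e11 : (cocycle τ₀ !![1,r;1,0] (n+1)) 1 1 = τ₀ (M 1 0) * r := by
        rw [cocycle_succ']
        simp [Matrix.mul_apply, Fin.sum_univ_two, Matrix.map_apply]
        exact Or.inl rfl
      rw [e00, e01, e10, e11, Function.iterate_succ_apply' σ n (c 0)]
      have hrel := hc n (Nat.lt_succ_self n)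
      simp only [map_mul, map_add]
      linear_combination (c (n+1)) * h2
        - (σ ((⇑σ)^[n] (c 0)) * algebraMap F U (τ₀ (M 1 0))
            - algebraMap F U (τ₀ (M 0 0))) * hrel

theorem stmt10 {K : Type*} {F : Type u} [Field K] [CharZero K] [Field F] [Algebra K F]
    -- `F/K` is an algebraic function field of one variable
    (hFK : ∃ x : F, Transcendental K x ∧
      Algebra.IsAlgebraic (IntermediateField.adjoin K ({x} : Set F)) F)
    (τ₀ : F →+* F) (hτ₀ : Function.Injective τ₀)
    (r : F) (hr : r ≠ 0)
    -- a place `P` of `F/K` with `v_P(τ₀ⁱ r) > 0` for all `i ≥ 0`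
    (v : AddValuation F (WithTop ℤ))
    (hvK : ∀ a : K, a ≠ 0 → v (algebraMap K F a) = 0)
    (hvnorm : ∃ z : F, z ≠ 0 ∧ v z = 1)
    (hvr : ∀ i : ℕ, 0 < v ((⇑τ₀)^[i] r))
    -- for every `i ≥ 1`, `Eq(A, i)` has no solution algebraic over `F`
    (hnoalg : ∀ (U : Type u) [Field U] [Algebra F U] (σ : U →+* U),
      (∀ x : F, σ (algebraMap F U x) = algebraMap F U (τ₀ x)) →
      ∀ u : U, IsAlgebraic F u → ∀ i : ℕ, 1 ≤ i →
        ¬ MoebiusEq ((⇑σ)^[i] u)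
            ((cocycle τ₀ !![1, r; 1, 0] i).map (algebraMap F U)) u)
    -- `τ` extends `τ₀` to `F(Y)` with `τ(Y) = 1 + r/Y`
    (τ : RatFunc F →+* RatFunc F)
    (hτF : ∀ x : F, τ (algebraMap F (RatFunc F) x) = algebraMap F (RatFunc F) (τ₀ x))
    (hτY : τ RatFunc.X = 1 + algebraMap F (RatFunc F) r / RatFunc.X)
    (α : F) (hα : α ≠ 0) :
    ¬ ∃ S : RatFunc F,
        S + algebraMap F (RatFunc F) r / RatFunc.X ^ 2 * τ S
          + algebraMap F (RatFunc F) α / RatFunc.X = 0 := by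
  haveI : CharZero F := charZero_of_injective_algebraMap (algebraMap K F).injective
  rintro ⟨S, hS⟩
  -- the case S = 0
  by_cases hS0 : S = 0
  · rw [hS0, map_zero, mul_zero] at hS
    simp only [zero_add] at hS
    rw [_root_.div_eq_zero_iff] at hS
    rcases hS with h | h
    · rw [RatFunc.algebraMap_eq_C] at h
      exact hα (by simpa using h)
    · exact RatFunc.X_ne_zero h
  -- S ≠ 0 : set up num and denom
  set N := S.num with hN
  set D := S.denom with hD
  have hD0 : D ≠ 0 := RatFunc.denom_ne_zero S
  have hN0 : N ≠ 0 := RatFunc.num_ne_zero hS0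
  have hDm : D.Monic := RatFunc.monic_denom S
  have hcop : IsCoprime N D := RatFunc.isCoprime_num_denom S
  set mN := N.natDegree with hmN
  set mD := D.natDegree with hmD
  have h3 := tau_bridge τ₀ r τ hτF hτY N mN le_rfl
  have h4 := tau_bridge τ₀ r τ hτF hτY D mD le_rfl
  have hND : algebraMap F[X] (RatFunc F) N / algebraMap F[X] (RatFunc F) D = S :=
    RatFunc.num_div_denom S
  have hADne : algebraMap F[X] (RatFunc F) D ≠ 0 := RatFunc.algebraMap_ne_zero hD0
  have h1 : S * algebraMap F[X] (RatFunc F) D = algebraMap F[X] (RatFunc F) N := by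
    rw [← hND]
    field_simp
  have h2 : τ S * τ (algebraMap F[X] (RatFunc F) D) = τ (algebraMap F[X] (RatFunc F) N) := by
    rw [← map_mul]
    exact congrArg τ h1
  have hXne : (RatFunc.X : RatFunc F) ≠ 0 := RatFunc.X_ne_zero
  have hS' : RatFunc.X^2 * S + algebraMap F (RatFunc F) r * τ S
      + algebraMap F (RatFunc F) α * RatFunc.X = 0 := by
    have h := hS
    field_simp at h
    have h2' : (RatFunc.X^2 * S + algebraMap F (RatFunc F) r * τ S
        + algebraMap F (RatFunc F) α * RatFunc.X) * RatFunc.X = 0 := by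
      linear_combination RatFunc.X * h
    exact (mul_eq_zero.mp h2').resolve_right hXne
  -- the polynomial identity over F
  have hstar0 : algebraMap F[X] (RatFunc F) (Polynomial.X^(mN+2) * N * TT τ₀ r mD D
      + Polynomial.C r * Polynomial.X^mD * TT τ₀ r mN N * D
      + Polynomial.C α * Polynomial.X^(mN+1) * D * TT τ₀ r mD D) = 0 := by
    simp only [map_add, map_mul, map_pow, RatFunc.algebraMap_X, RatFunc.algebraMap_C]
    rw [← h3, ← h4]
    simp only [← RatFunc.algebraMap_eq_C]
    linear_combination (-(RatFunc.X^(mN+mD+2) * τ (algebraMap F[X] (RatFunc F) D))) * h1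
      - (algebraMap F (RatFunc F) r * RatFunc.X^(mN+mD) * algebraMap F[X] (RatFunc F) D) * h2
      + (algebraMap F[X] (RatFunc F) D * τ (algebraMap F[X] (RatFunc F) D)
          * RatFunc.X^(mN+mD)) * hS'
  have star : Polynomial.X^(mN+2) * N * TT τ₀ r mD D
      + Polynomial.C r * Polynomial.X^mD * TT τ₀ r mN N * D
      + Polynomial.C α * Polynomial.X^(mN+1) * D * TT τ₀ r mD D = 0 := by
    apply RatFunc.algebraMap_injective F
    rw [hstar0, map_zero]
  -- move to the algebraic closure
  obtain ⟨σ, hσ⟩ := exists_sigma τ₀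
  set U := AlgebraicClosure F with hU
  set ι := algebraMap F U with hι
  have hcomm : ∀ x : F, ι (τ₀ x) = σ (ι x) := fun x => (hσ x).symm
  have hιinj : Function.Injective ι := ι.injective
  set NN := N.map ι with hNN
  set DD := D.map ι with hDD
  have hmNU : NN.natDegree = mN := Polynomial.natDegree_map ι
  have hmDU : DD.natDegree = mD := Polynomial.natDegree_map ι
  have hNNne : NN ≠ 0 := (Polynomial.map_ne_zero_iff hιinj).mpr hN0
  have hDDm : DD.Monic := hDm.map ι
  have hcopU : IsCoprime NN DD := IsCoprime.map hcop (Polynomial.mapRingHom ι)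
  have hρ : ι r ≠ 0 := fun h => hr (hιinj (h.trans (map_zero ι).symm))
  have starU : Polynomial.X^(NN.natDegree+2) * NN * TT σ (ι r) DD.natDegree DD
      + Polynomial.C (ι r) * Polynomial.X^(DD.natDegree) * TT σ (ι r) NN.natDegree NN * DD
      + Polynomial.C (ι α) * Polynomial.X^(NN.natDegree+1) * DD * TT σ (ι r) DD.natDegree DD
      = 0 := by
    have := congrArg (Polynomial.map ι) star
    rw [Polynomial.map_add, Polynomial.map_add] at this
    simp only [Polynomial.map_mul, Polynomial.map_pow, Polynomial.map_X, Polynomial.map_C,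
      Polynomial.map_zero] at this
    rw [TT_map τ₀ σ ι hcomm, TT_map τ₀ σ ι hcomm] at this
    rw [hmNU, hmDU]
    exact this
  -- apply the dichotomy
  rcases dichotomy σ (ι r) (ι α) hρ NN DD hNNne hDDm hcopU starU with
    ⟨n, c, hn1, hroot, hcyc, hrel⟩ | ⟨n, c, hn1, hc0, hcn, hrel⟩
  · -- cycle case : algebraic solution of Eq(A, n), contradiction with hnoalg
    have halg : IsAlgebraic F (c 0) := by
      refine ⟨D, hD0, ?_⟩
      rw [Polynomial.aeval_def, ← Polynomial.eval_map]
      exact hroot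
    apply hnoalg U σ hσ (c 0) halg n hn1
    have hid := chain_cocycle τ₀ σ hσ r c n hrel
    rw [hcyc] at hid
    show (⇑σ)^[n] (c 0) * (((cocycle τ₀ !![1, r; 1, 0] n).map ι) 1 0 * c 0
        + ((cocycle τ₀ !![1, r; 1, 0] n).map ι) 1 1)
      = ((cocycle τ₀ !![1, r; 1, 0] n).map ι) 0 0 * c 0
        + ((cocycle τ₀ !![1, r; 1, 0] n).map ι) 0 1
    simp only [Matrix.map_apply]
    exact hid
  · -- chain from 0 to 1 : contradiction with the valuation
    have hid := chain_cocycle τ₀ σ hσ r c n hrel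
    rw [hc0, hcn] at hid
    rw [Function.iterate_fixed (map_zero σ) n, zero_mul] at hid
    have hsum : ι ((cocycle τ₀ !![1, r; 1, 0] n) 0 0 + (cocycle τ₀ !![1, r; 1, 0] n) 0 1) = 0 := by
      rw [map_add]
      linear_combination -hid
    have hsum0 : (cocycle τ₀ !![1, r; 1, 0] n) 0 0 + (cocycle τ₀ !![1, r; 1, 0] n) 0 1 = 0 :=
      hιinj (by rw [hsum, map_zero])
    have hv := (val_s τ₀ r v hvr n).1
    rw [hsum0] at hv
    rw [AddValuation.map_zero] at hv
    exact (by simp : (⊤ : WithTop ℤ) ≠ (0 : WithTop ℤ)) hv
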